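/- Let p be a prime, γ ≥ 1 an integer, C ⊆ {0, 1, …, p^γ − 1} a nonempty set of integers, and Ω = ⋃_{c∈C} (c + p^γ ℤ_p). Let ψ be a standard character of ℚ_p and μ the normalized Haar measure. If Λ ⊆ ℚ_p is a spectrum of Ω, then for every a ∈ ℚ_p the closed ball B(a, p^γ) contains exactly #C points of Λ. -/

import Mathlib

open MeasureTheory ComplexConjugate
open scoped ENNReal

local notation "⟪" x ", " y "⟫" => @inner ℂ _ _ x y

noncomputable section

namespace SpecAux

variable {p : ℕ} [hp : Fact p.Prime]

lemma sball_eq (b : ℚ_[p]) (r : ℝ) :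
    {x : ℚ_[p] | ‖x - b‖ ≤ r} = Metric.closedBall b r := by
  ext x; simp [Metric.mem_closedBall, dist_eq_norm]

lemma ms_sball [MeasurableSpace ℚ_[p]] [BorelSpace ℚ_[p]] (b : ℚ_[p]) (r : ℝ) :
    MeasurableSet {x : ℚ_[p] | ‖x - b‖ ≤ r} := by
  rw [sball_eq]; exact measurableSet_closedBall

lemma unitBall_eq_biUnion (γ : ℕ) :
    {x : ℚ_[p] | ‖x‖ ≤ 1} =
      ⋃ j ∈ Finset.range (p ^ γ), {x : ℚ_[p] | ‖x - (j : ℚ_[p])‖ ≤ (p : ℝ) ^ (-(γ : ℤ))} := by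
  ext x
  simp only [Set.mem_iUnion, Set.mem_setOf_eq, Finset.mem_range, exists_prop]
  constructor
  · intro hx
    set z : ℤ_[p] := ⟨x, hx⟩ with hz
    refine ⟨z.appr γ, z.appr_lt γ, ?_⟩
    have h1 : ‖z - (z.appr γ : ℤ_[p])‖ ≤ (p : ℝ) ^ (-(γ:ℤ)) :=
      ((z - (z.appr γ : ℤ_[p])).norm_le_pow_iff_mem_span_pow γ).mpr (z.appr_spec γ)
    have h2 : ((z - (z.appr γ : ℤ_[p]) : ℤ_[p]) : ℚ_[p]) = x - (z.appr γ : ℚ_[p]) := by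
      push_cast [hz]
      rfl
    rw [PadicInt.norm_def, h2] at h1
    exact h1
  · rintro ⟨j, hj, hxj⟩
    have h1 : ‖(j : ℚ_[p])‖ ≤ 1 := by
      have := Padic.norm_int_le_one (p := p) (j : ℤ)
      rwa [Int.cast_natCast] at this
    have hr : (p : ℝ) ^ (-(γ:ℤ)) ≤ 1 := by
      apply zpow_le_one_of_nonpos₀
      · exact_mod_cast hp.1.one_le
      · simp
    have h2 : ‖x - (j:ℚ_[p])‖ ≤ 1 := le_trans hxj hr
    have : ‖x - (j:ℚ_[p]) + (j:ℚ_[p])‖ ≤ max ‖x - (j:ℚ_[p])‖ ‖(j:ℚ_[p])‖ :=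
      Padic.nonarchimedean _ _
    simpa using le_trans this (max_le h2 h1)

lemma balls_disjoint {γ : ℕ} {i j : ℕ} (hi : i < p ^ γ) (hj : j < p ^ γ) (hij : i ≠ j) :
    Disjoint {x : ℚ_[p] | ‖x - (i : ℚ_[p])‖ ≤ (p:ℝ)^(-(γ:ℤ))}
      {x : ℚ_[p] | ‖x - (j : ℚ_[p])‖ ≤ (p:ℝ)^(-(γ:ℤ))} := by
  rw [Set.disjoint_left]
  rintro x hxi hxj
  have key : ‖(((i:ℤ) - (j:ℤ) : ℤ) : ℚ_[p])‖ ≤ (p:ℝ)^(-(γ:ℤ)) := by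
    have he : (((i:ℤ) - (j:ℤ) : ℤ) : ℚ_[p]) = (x - (j:ℚ_[p])) + -(x - (i:ℚ_[p])) := by
      push_cast; ring
    rw [he]
    refine le_trans (Padic.nonarchimedean _ _) (max_le hxj ?_)
    rwa [norm_neg]
  rw [Padic.norm_int_le_pow_iff_dvd] at key
  have hcast : ((p:ℤ))^γ = ((p^γ : ℕ) : ℤ) := by push_cast; ring
  have habs : |(i:ℤ) - (j:ℤ)| < ((p^γ : ℕ) : ℤ) := by
    rw [abs_sub_lt_iff]; omega
  have hne : (i:ℤ) - (j:ℤ) ≠ 0 := by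
    intro h; apply hij; omega
  have hd2 := Int.le_of_dvd (abs_pos.mpr hne) ((dvd_abs _ _).mpr key)
  rw [hcast] at hd2
  exact absurd hd2 (not_le.mpr habs)


variable [MeasurableSpace ℚ_[p]] [BorelSpace ℚ_[p]]
  (μ : Measure ℚ_[p]) [μ.IsAddHaarMeasure]

lemma meas_translate (b : ℚ_[p]) (r : ℝ) :
    μ {x : ℚ_[p] | ‖x - b‖ ≤ r} = μ {x : ℚ_[p] | ‖x‖ ≤ r} := by
  have h : {x : ℚ_[p] | ‖x - b‖ ≤ r} = (fun x => (-b) + x) ⁻¹' {x : ℚ_[p] | ‖x‖ ≤ r} := by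
    ext x; simp [neg_add_eq_sub]
  rw [h, measure_preimage_add]

lemma meas_small_ball (hμ1 : μ {x : ℚ_[p] | ‖x‖ ≤ 1} = 1) (γ : ℕ) (b : ℚ_[p]) :
    μ {x : ℚ_[p] | ‖x - b‖ ≤ (p : ℝ) ^ (-(γ : ℤ))} = ((p : ℝ≥0∞) ^ γ)⁻¹ := by
  classical
  have hpne : ((p : ℝ≥0∞) ^ γ) ≠ 0 := by
    simp [pow_ne_zero, hp.1.ne_zero]
  have hpnt : ((p : ℝ≥0∞) ^ γ) ≠ ⊤ := by
    simp [ENNReal.pow_ne_top]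
  have hsum : ∑ j ∈ Finset.range (p ^ γ), μ {x : ℚ_[p] | ‖x - (j : ℚ_[p])‖ ≤ (p : ℝ) ^ (-(γ : ℤ))} = 1 := by
    rw [← measure_biUnion_finset ?hd (fun j _ => ms_sball _ _)]
    · rw [← unitBall_eq_biUnion, hμ1]
    case hd =>
      intro i hi j hj hij
      exact balls_disjoint (Finset.mem_range.mp hi) (Finset.mem_range.mp hj) hij
  have heq : ∀ j : ℕ, μ {x : ℚ_[p] | ‖x - (j : ℚ_[p])‖ ≤ (p : ℝ) ^ (-(γ : ℤ))}
      = μ {x : ℚ_[p] | ‖x‖ ≤ (p : ℝ) ^ (-(γ : ℤ))} := fun j => meas_translate μ _ _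
  rw [Finset.sum_congr rfl (fun j _ => heq j), Finset.sum_const, Finset.card_range] at hsum
  have hpow : ((p ^ γ : ℕ) : ℝ≥0∞) = (p : ℝ≥0∞) ^ γ := by push_cast; ring
  have hm : (p : ℝ≥0∞) ^ γ * μ {x : ℚ_[p] | ‖x‖ ≤ (p : ℝ) ^ (-(γ : ℤ))} = 1 := by
    rw [← hpow, ← nsmul_eq_mul]; exact hsum
  rw [meas_translate μ b]
  calc μ {x : ℚ_[p] | ‖x‖ ≤ (p : ℝ) ^ (-(γ : ℤ))}
      = ((p : ℝ≥0∞) ^ γ)⁻¹ * ((p : ℝ≥0∞) ^ γ * μ {x : ℚ_[p] | ‖x‖ ≤ (p : ℝ) ^ (-(γ : ℤ))}) := by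
        rw [← mul_assoc, ENNReal.inv_mul_cancel hpne hpnt, one_mul]
    _ = ((p : ℝ≥0∞) ^ γ)⁻¹ := by rw [hm, mul_one]

lemma toReal_inv_pow (γ : ℕ) : (((p : ℝ≥0∞) ^ γ)⁻¹).toReal = ((p:ℝ)^γ)⁻¹ := by
  simp [ENNReal.toReal_inv]

lemma integral_small_ball (ψ : ℚ_[p] → ℂ)
    (hadd : ∀ x y, ψ (x + y) = ψ x * ψ y)
    (htriv : ∀ x : ℚ_[p], ‖x‖ ≤ 1 → ψ x = 1)
    (hnt : ∃ x : ℚ_[p], ‖x‖ ≤ p ∧ ψ x ≠ 1)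
    (hμ1 : μ {x : ℚ_[p] | ‖x‖ ≤ 1} = 1) (γ : ℕ) (b t : ℚ_[p]) :
    ∫ x in {x : ℚ_[p] | ‖x - b‖ ≤ (p:ℝ)^(-(γ:ℤ))}, ψ (t * x) ∂μ
      = if ‖t‖ ≤ (p:ℝ)^(γ:ℤ) then ((((p:ℝ)^γ)⁻¹ : ℝ) : ℂ) * ψ (t * b) else 0 := by
  have hp1 : (1:ℝ) < (p:ℝ) := by exact_mod_cast hp.1.one_lt
  have hp0 : (0:ℝ) < (p:ℝ) := by positivity
  set A := {x : ℚ_[p] | ‖x - b‖ ≤ (p:ℝ)^(-(γ:ℤ))} with hA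
  by_cases ht : ‖t‖ ≤ (p:ℝ)^(γ:ℤ)
  · rw [if_pos ht]
    have hEq : Set.EqOn (fun x => ψ (t * x)) (fun _ => ψ (t * b)) A := by
      intro x hx
      have h1 : ‖t * (x - b)‖ ≤ 1 := by
        rw [norm_mul]
        calc ‖t‖ * ‖x - b‖ ≤ (p:ℝ)^(γ:ℤ) * (p:ℝ)^(-(γ:ℤ)) :=
          mul_le_mul ht hx (norm_nonneg _) (by positivity)
        _ = 1 := by rw [← zpow_add₀ (ne_of_gt hp0)]; simp
      have : t * x = t * b + t * (x - b) := by ring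
      simp only [this, hadd, htriv _ h1, mul_one]
    rw [setIntegral_congr_fun (ms_sball b _) hEq, setIntegral_const, ← hA, measureReal_def, hA,
      meas_small_ball μ hμ1 γ b, toReal_inv_pow, Complex.real_smul]
  · rw [if_neg ht]
    push_neg at ht
    have htne : t ≠ 0 := by
      intro h; rw [h, norm_zero] at ht; exact absurd ht (not_lt.mpr (by positivity))
    obtain ⟨x₀, hx₀n, hx₀⟩ := hnt
    -- ‖t‖ ≥ p^(γ+1)
    have hval : (p:ℝ)^((γ:ℤ)+1) ≤ ‖t‖ := by
      rw [Padic.norm_eq_zpow_neg_valuation htne] at ht ⊢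
      have : (γ:ℤ) < -t.valuation := by
        exact (zpow_lt_zpow_iff_right₀ hp1).mp ht
      exact zpow_le_zpow_right₀ (le_of_lt hp1) (by omega)
    set s := t⁻¹ * x₀ with hs
    have hts : t * s = x₀ := by
      rw [hs, ← mul_assoc, mul_inv_cancel₀ htne, one_mul]
    have hsn : ‖s‖ ≤ (p:ℝ)^(-(γ:ℤ)) := by
      rw [hs, norm_mul, norm_inv]
      have h1 : ‖t‖⁻¹ ≤ ((p:ℝ)^((γ:ℤ)+1))⁻¹ := by
        apply inv_anti₀ (by positivity) hval
      calc ‖t‖⁻¹ * ‖x₀‖ ≤ ((p:ℝ)^((γ:ℤ)+1))⁻¹ * (p:ℝ) :=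
        mul_le_mul h1 hx₀n (norm_nonneg _) (by positivity)
      _ = (p:ℝ)^(-(γ:ℤ)) := by
        rw [inv_mul_eq_iff_eq_mul₀ (by positivity), ← zpow_add₀ (ne_of_gt hp0)]
        norm_num
    -- ball invariance
    have hinv : (fun x => x + s) ⁻¹' A = A := by
      ext x
      simp only [Set.mem_preimage, hA, Set.mem_setOf_eq]
      constructor
      · intro h
        have : x - b = (x + s - b) + -s := by ring
        rw [this]
        exact le_trans (Padic.nonarchimedean _ _)
          (max_le h (by rwa [norm_neg]))
      · intro h
        have : x + s - b = (x - b) + s := by ring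
        rw [this]
        exact le_trans (Padic.nonarchimedean _ _) (max_le h hsn)
    have hmp := (measurePreserving_add_right μ s).setIntegral_preimage_emb
      (MeasurableEquiv.addRight s).measurableEmbedding (fun x => ψ (t * x)) A
    rw [hinv] at hmp
    have hexp : ∀ x : ℚ_[p], ψ (t * (x + s)) = ψ (t * x) * ψ x₀ := by
      intro x
      rw [← hts, show t * (x + s) = t * x + t * s by ring, hadd]
    simp only [hexp] at hmp
    rw [integral_mul_const] at hmp
    have hone : (1 - ψ x₀) ≠ 0 := by
      intro h
      apply hx₀
      have := sub_eq_zero.mp h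
      exact this.symm
    have : (∫ x in A, ψ (t * x) ∂μ) * (1 - ψ x₀) = 0 := by
      rw [mul_sub, mul_one, hmp, sub_self]
    rcases mul_eq_zero.mp this with h | h
    · exact h
    · exact absurd h hone

lemma Lp_coeFn_finset_sum {α : Type*} [MeasurableSpace α] {ν : Measure α} {ι : Type*}
    (s : Finset ι) (f : ι → Lp ℂ 2 ν) :
    ⇑(∑ i ∈ s, f i) =ᵐ[ν] fun x => ∑ i ∈ s, f i x := by
  classical
  induction s using Finset.induction_on with
  | empty => simp only [Finset.sum_empty]; exact Lp.coeFn_zero _ _ _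
  | @insert a s ha ih =>
    rw [Finset.sum_insert ha]
    filter_upwards [Lp.coeFn_add (f a) (∑ i ∈ s, f i), ih] with x hx hx2
    rw [hx]
    simp only [Pi.add_apply, Finset.sum_insert ha, hx2]

end SpecAux

/-- A standard character of `ℚ_p`. -/
def IsStdChar (p : ℕ) [Fact p.Prime] (ψ : ℚ_[p] → ℂ) : Prop :=
  Continuous ψ ∧ (∀ x y, ψ (x + y) = ψ x * ψ y) ∧ (∀ x, ‖ψ x‖ = 1) ∧
    (∀ x : ℚ_[p], ‖x‖ ≤ 1 → ψ x = 1) ∧ ∃ x : ℚ_[p], ‖x‖ ≤ p ∧ ψ x ≠ 1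

/-- `Λ` is a spectrum of `Ω`. -/
def IsSpectrum (p : ℕ) [Fact p.Prime] [MeasurableSpace ℚ_[p]] (ψ : ℚ_[p] → ℂ)
    (μ : Measure ℚ_[p]) (Ω Λ : Set ℚ_[p]) : Prop :=
  (∀ l₁ ∈ Λ, ∀ l₂ ∈ Λ, l₁ ≠ l₂ →
      ∫ x in Ω, ψ (l₁ * x) * (starRingEnd ℂ) (ψ (l₂ * x)) ∂μ = 0) ∧
  Dense (↑(Submodule.span ℂ {g : Lp ℂ 2 (μ.restrict Ω) |
      ∃ l ∈ Λ, ∀ᵐ x ∂(μ.restrict Ω), g x = ψ (l * x)}) : Set (Lp ℂ 2 (μ.restrict Ω)))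

open SpecAux

/-- if `Λ` is a spectrum of `Ω = ⋃_{c∈C}(c + p^γ ℤ_p)`, then every closed ball
of radius `p^γ` contains exactly `#C` points of `Λ`. -/
theorem spectrum_uniformly_distributed
    (p γ : ℕ) [Fact p.Prime] (hγ : 1 ≤ γ)
    (C : Finset ℕ) (hCne : C.Nonempty) (hCsub : ∀ c ∈ C, c < p ^ γ)
    (ψ : ℚ_[p] → ℂ) (hψ : IsStdChar p ψ)
    [MeasurableSpace ℚ_[p]] [BorelSpace ℚ_[p]]
    (μ : Measure ℚ_[p]) [μ.IsAddHaarMeasure]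
    (hμ : μ {x : ℚ_[p] | ‖x‖ ≤ 1} = 1)
    (Ω : Set ℚ_[p])
    (hΩ : Ω = ⋃ c ∈ C, {x : ℚ_[p] | ‖x - (c : ℚ_[p])‖ ≤ (p : ℝ) ^ (-(γ : ℤ))})
    (Λ : Set ℚ_[p]) (hΛ : IsSpectrum p ψ μ Ω Λ) :
    ∀ a : ℚ_[p], (Λ ∩ {x : ℚ_[p] | ‖x - a‖ ≤ (p : ℝ) ^ (γ : ℤ)}).ncard = C.card := by
  classical
  intro a
  obtain ⟨hcont, hadd, habs, htriv, hnt⟩ := hψ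
  -- basic character facts
  have hψ0 : ψ 0 = 1 := htriv 0 (by simp)
  have hψne : ∀ y, ψ y ≠ 0 := by
    intro y h
    have := habs y
    rw [h] at this
    simp at this
  have hconj : ∀ y, (starRingEnd ℂ) (ψ y) = ψ (-y) := by
    intro y
    have h1 : ψ y * ψ (-y) = 1 := by rw [← hadd]; simp [hψ0]
    have h2 : (starRingEnd ℂ) (ψ y) * ψ y = 1 := by
      rw [mul_comm, Complex.mul_conj, ← Complex.sq_norm, habs]
      norm_num
    calc (starRingEnd ℂ) (ψ y) = (starRingEnd ℂ) (ψ y) * (ψ y * ψ (-y)) := by rw [h1, mul_one]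
      _ = ((starRingEnd ℂ) (ψ y) * ψ y) * ψ (-y) := by ring
      _ = ψ (-y) := by rw [h2, one_mul]
  have honemul : ∀ y, (starRingEnd ℂ) (ψ y) * ψ y = 1 := by
    intro y
    rw [mul_comm, Complex.mul_conj, ← Complex.sq_norm, habs]
    norm_num
  have hnorm1 : ∀ y, ‖ψ y‖ = 1 := fun y => habs y
  -- sets
  set r : ℝ := (p : ℝ) ^ (-(γ : ℤ)) with hr
  set T : ℕ → Set ℚ_[p] := fun c => {x : ℚ_[p] | ‖x - (c : ℚ_[p])‖ ≤ r} with hT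
  set B : Set ℚ_[p] := {x : ℚ_[p] | ‖x - a‖ ≤ (p : ℝ) ^ (γ : ℤ)} with hB
  set S : Set ℚ_[p] := Λ ∩ B with hS
  have hdisj : (↑C : Set ℕ).Pairwise (Function.onFun Disjoint fun c => T c) :=
    fun i hi j hj hij => balls_disjoint (hCsub i hi) (hCsub j hj) hij
  have hTmeas : ∀ c : ℕ, MeasurableSet (T c) := fun c => ms_sball _ _
  have hΩmeas : MeasurableSet Ω := by
    rw [hΩ]; exact Finset.measurableSet_biUnion _ (fun c _ => ms_sball _ _)
  have hTsub : ∀ c ∈ C, T c ⊆ Ω := by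
    intro c hc
    rw [hΩ]
    exact Set.subset_biUnion_of_mem hc
  have hμT : ∀ c : ℕ, μ (T c) = ((p : ℝ≥0∞) ^ γ)⁻¹ := fun c => meas_small_ball μ hμ γ _
  have hμΩ : μ Ω = (C.card : ℝ≥0∞) * ((p : ℝ≥0∞) ^ γ)⁻¹ := by
    rw [hΩ, measure_biUnion_finset hdisj (fun c _ => hTmeas c)]
    rw [Finset.sum_congr rfl (fun c _ => hμT c), Finset.sum_const, nsmul_eq_mul]
  have hpEtop : ((p : ℝ≥0∞) ^ γ)⁻¹ ≠ ⊤ := by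
    simp [pow_ne_zero, (Fact.out : p.Prime).ne_zero]
  have hμΩtop : μ Ω ≠ ⊤ := by
    rw [hμΩ]
    exact ENNReal.mul_ne_top (by simp) hpEtop
  have hμΩR : (μ Ω).toReal = (C.card : ℝ) * ((p : ℝ) ^ γ)⁻¹ := by
    rw [hμΩ, ENNReal.toReal_mul, toReal_inv_pow]
    simp
  have hμΩR0 : (μ Ω).toReal ≠ 0 := by
    rw [hμΩR]
    have h1 : 0 < (C.card : ℝ) := by
      have := Finset.card_pos.mpr hCne
      exact_mod_cast this
    have h2 : (0:ℝ) < (p:ℝ)^γ := by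
      have : (0:ℝ) < (p:ℝ) := by exact_mod_cast (Fact.out : p.Prime).pos
      positivity
    positivity
  have hμTR : ∀ c : ℕ, (μ (T c)).toReal = ((p : ℝ) ^ γ)⁻¹ := by
    intro c; rw [hμT, toReal_inv_pow]
  have hμTR0 : ∀ c : ℕ, (μ (T c)).toReal ≠ 0 := by
    intro c
    rw [hμTR]
    have h2 : (0:ℝ) < (p:ℝ)^γ := by
      have : (0:ℝ) < (p:ℝ) := by exact_mod_cast (Fact.out : p.Prime).pos
      positivity
    positivity
  set ν : Measure ℚ_[p] := μ.restrict Ω with hν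
  haveI : IsFiniteMeasure ν := by
    constructor
    rw [hν, Measure.restrict_apply_univ]
    exact lt_of_le_of_ne le_top hμΩtop
  -- Lp elements
  have hcont' : ∀ l : ℚ_[p], Continuous (fun x => ψ (l * x)) :=
    fun l => hcont.comp (continuous_const.mul continuous_id)
  have hmem : ∀ l : ℚ_[p], MemLp (fun x => ψ (l * x)) 2 ν := by
    intro l
    refine MemLp.of_bound ((hcont' l).aestronglyMeasurable) 1 ?_
    filter_upwards with x
    rw [hnorm1]
  set fF : ℕ → ℚ_[p] → ℂ := fun c => (T c).indicator (fun x => ψ (a * x)) with hfF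
  have hmemF : ∀ c : ℕ, MemLp (fF c) 2 ν := by
    intro c
    refine MemLp.of_bound (((hcont' a).stronglyMeasurable.indicator (hTmeas c)).aestronglyMeasurable) 1 ?_
    filter_upwards with x
    by_cases hx : x ∈ T c
    · rw [hfF]; simp only [Set.indicator_of_mem hx]; rw [hnorm1]
    · rw [hfF]; simp only [Set.indicator_of_notMem hx]; simp
  set E : ℚ_[p] → Lp ℂ 2 ν := fun l => (hmem l).toLp _ with hE
  set F : ℕ → Lp ℂ 2 ν := fun c => (hmemF c).toLp _ with hF
  have hEcoe : ∀ l, (⇑(E l) : ℚ_[p] → ℂ) =ᵐ[ν] fun x => ψ (l * x) := fun l => (hmem l).coeFn_toLp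
  have hFcoe : ∀ c, (⇑(F c) : ℚ_[p] → ℂ) =ᵐ[ν] fF c := fun c => (hmemF c).coeFn_toLp
  have hinner_EE : ∀ l₁ l₂ : ℚ_[p],
      ⟪E l₁, E l₂⟫ = ∫ x in Ω, (starRingEnd ℂ) (ψ (l₁ * x)) * ψ (l₂ * x) ∂μ := by
    intro l₁ l₂
    rw [MeasureTheory.L2.inner_def]
    refine integral_congr_ae ?_
    filter_upwards [hEcoe l₁, hEcoe l₂] with x h1 h2
    rw [RCLike.inner_apply', h1, h2]
  have hEE0 : ∀ l₁ ∈ Λ, ∀ l₂ ∈ Λ, l₁ ≠ l₂ → ⟪E l₁, E l₂⟫ = 0 := by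
    intro l₁ h₁ l₂ h₂ hne
    rw [hinner_EE]
    have h0 := hΛ.1 l₁ h₁ l₂ h₂ hne
    have hcc : ∫ x in Ω, (starRingEnd ℂ) (ψ (l₁ * x)) * ψ (l₂ * x) ∂μ
        = (starRingEnd ℂ) (∫ x in Ω, ψ (l₁ * x) * (starRingEnd ℂ) (ψ (l₂ * x)) ∂μ) := by
      rw [← integral_conj]
      refine integral_congr_ae ?_
      filter_upwards with x
      simp only [map_mul, Complex.conj_conj]
    rw [hcc, h0, map_zero]
  have hEself : ∀ l, ⟪E l, E l⟫ = ((μ Ω).toReal : ℂ) := by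
    intro l
    rw [hinner_EE]
    have hpt : ∀ x : ℚ_[p], (starRingEnd ℂ) (ψ (l * x)) * ψ (l * x) = (1:ℂ) := fun x => honemul _
    rw [integral_congr_ae (Filter.Eventually.of_forall hpt), setIntegral_const]
    simp [measureReal_def]
  have hE0 : ∀ l, E l ≠ 0 := by
    intro l h
    have h2 := hEself l
    rw [h, inner_zero_left] at h2
    exact hμΩR0 (by exact_mod_cast h2.symm)
  have hinner_FE : ∀ c ∈ C, ∀ l : ℚ_[p],
      ⟪F c, E l⟫ = if ‖l - a‖ ≤ (p:ℝ)^(γ:ℤ)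
        then ((((p:ℝ)^γ)⁻¹ : ℝ) : ℂ) * ψ ((l - a) * c) else 0 := by
    intro c hc l
    rw [MeasureTheory.L2.inner_def]
    have step1 : ∫ x, ⟪(F c) x, (E l) x⟫ ∂ν
        = ∫ x in Ω, (T c).indicator (fun x => ψ ((l - a) * x)) x ∂μ := by
      refine integral_congr_ae ?_
      filter_upwards [hFcoe c, hEcoe l] with x h1 h2
      rw [RCLike.inner_apply', h1, h2]
      by_cases hx : x ∈ T c
      · rw [hfF]
        simp only [Set.indicator_of_mem hx]
        rw [hconj, ← hadd]
        congr 1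
        ring
      · rw [hfF]
        simp only [Set.indicator_of_notMem hx, map_zero, zero_mul]
    rw [step1, setIntegral_indicator (hTmeas c),
      Set.inter_eq_self_of_subset_right (hTsub c hc)]
    exact integral_small_ball μ ψ hadd htriv hnt hμ γ (c:ℚ_[p]) (l - a)
  have hinner_FF : ∀ c₁ ∈ C, ∀ c₂ ∈ C, c₁ ≠ c₂ → ⟪F c₁, F c₂⟫ = 0 := by
    intro c₁ h₁ c₂ h₂ hne
    rw [MeasureTheory.L2.inner_def]
    have hzero : ∀ᵐ x ∂ν, ⟪(F c₁) x, (F c₂) x⟫ = 0 := by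
      filter_upwards [hFcoe c₁, hFcoe c₂] with x h1 h2
      rw [RCLike.inner_apply', h1, h2]
      have hdis := balls_disjoint (hCsub c₁ h₁) (hCsub c₂ h₂) hne
      by_cases hx : x ∈ T c₁
      · have hx2 : x ∉ T c₂ := fun hx2 => (Set.disjoint_left.mp hdis) hx hx2
        rw [hfF]
        simp [Set.indicator_of_notMem hx2]
      · rw [hfF]
        simp [Set.indicator_of_notMem hx]
    rw [integral_congr_ae hzero, integral_zero]
  have hFself : ∀ c ∈ C, ⟪F c, F c⟫ = (((μ (T c)).toReal : ℝ) : ℂ) := by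
    intro c hc
    rw [MeasureTheory.L2.inner_def]
    have hval : ∀ᵐ x ∂ν, ⟪(F c) x, (F c) x⟫ = (T c).indicator (fun _ => (1:ℂ)) x := by
      filter_upwards [hFcoe c] with x h1
      rw [RCLike.inner_apply', h1]
      by_cases hx : x ∈ T c
      · rw [hfF]
        simp only [Set.indicator_of_mem hx]
        exact honemul _
      · rw [hfF]
        simp [Set.indicator_of_notMem hx]
    rw [integral_congr_ae hval]
    have : ∫ x, (T c).indicator (fun _ => (1:ℂ)) x ∂ν
        = ∫ x in Ω ∩ T c, (1:ℂ) ∂μ := setIntegral_indicator (hTmeas c)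
    rw [this, Set.inter_eq_self_of_subset_right (hTsub c hc), setIntegral_const]
    simp [measureReal_def]
  have hF0 : ∀ c ∈ C, F c ≠ 0 := by
    intro c hc h
    have h2 := hFself c hc
    rw [h, inner_zero_left] at h2
    exact hμTR0 c (by exact_mod_cast h2.symm)
  -- decomposition of E l for l in the big ball
  have hppos : (0:ℝ) < (p:ℝ) := by exact_mod_cast (Fact.out : p.Prime).pos
  have hdecomp : ∀ l : ℚ_[p], ‖l - a‖ ≤ (p:ℝ)^(γ:ℤ) →
      E l = ∑ c ∈ C, ψ ((l - a) * c) • F c := by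
    intro l hl
    refine MeasureTheory.Lp.ext ?_
    have hsum := Lp_coeFn_finset_sum C (fun c => ψ ((l - a) * c) • F c)
    have hsmul : ∀ᵐ x ∂ν, ∀ c ∈ C, (⇑(ψ ((l - a) * c) • F c)) x = ψ ((l - a) * c) * fF c x := by
      rw [Filter.eventually_all_finset]
      intro c hc
      filter_upwards [Lp.coeFn_smul (ψ ((l - a) * c)) (F c), hFcoe c] with x h1 h2
      rw [h1]
      simp [h2]
    have hmemΩ : ∀ᵐ x ∂ν, x ∈ Ω := ae_restrict_mem hΩmeas
    filter_upwards [hEcoe l, hsum, hsmul, hmemΩ] with x h1 h2 h3 h4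
    rw [h1, h2, Finset.sum_congr rfl h3]
    rw [hΩ] at h4
    simp only [Set.mem_iUnion, exists_prop] at h4
    obtain ⟨c₀, hc₀C, hxc₀⟩ := h4
    rw [Finset.sum_eq_single_of_mem c₀ hc₀C ?_]
    · rw [hfF]
      simp only [Set.indicator_of_mem (show x ∈ T c₀ from hxc₀)]
      have hm : ψ ((l - a) * (x - (c₀:ℚ_[p]))) = 1 := by
        apply htriv
        rw [norm_mul]
        calc ‖l - a‖ * ‖x - (c₀:ℚ_[p])‖ ≤ (p:ℝ)^(γ:ℤ) * (p:ℝ)^(-(γ:ℤ)) :=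
          mul_le_mul hl hxc₀ (norm_nonneg _) (by positivity)
        _ = 1 := by rw [← zpow_add₀ (ne_of_gt hppos)]; simp
      calc ψ (l * x)
          = ψ (((l - a) * c₀ + a * x) + (l - a) * (x - (c₀:ℚ_[p]))) := by
            rw [show l * x = ((l - a) * c₀ + a * x) + (l - a) * (x - (c₀:ℚ_[p])) from by ring]
        _ = ψ ((l - a) * c₀ + a * x) * ψ ((l - a) * (x - (c₀:ℚ_[p]))) := hadd _ _
        _ = ψ ((l - a) * c₀) * ψ (a * x) := by rw [hm, mul_one, hadd]
    · intro c hc hne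
      have hd := balls_disjoint (p := p) (hCsub c hc) (hCsub c₀ hc₀C) hne
      have hx : x ∉ T c := fun hx => (Set.disjoint_left.mp hd) hx hxc₀
      rw [hfF]
      simp [Set.indicator_of_notMem hx]
  -- the finite-dimensional subspace W
  set FC : {c // c ∈ C} → Lp ℂ 2 ν := fun c => F c with hFC
  have hFCli : LinearIndependent ℂ FC := by
    apply linearIndependent_of_ne_zero_of_inner_eq_zero
    · intro c
      exact hF0 c c.2
    · intro c₁ c₂ hne
      exact hinner_FF c₁ c₁.2 c₂ c₂.2 (fun h => hne (Subtype.ext h))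
  set W : Submodule ℂ (Lp ℂ 2 ν) := Submodule.span ℂ (Set.range FC) with hW
  haveI hWfd : FiniteDimensional ℂ W := FiniteDimensional.span_of_finite ℂ (Set.finite_range FC)
  have hWrank : Module.finrank ℂ W = C.card := by
    rw [hW, finrank_span_eq_card hFCli]
    exact Fintype.card_coe C
  have hEW : ∀ l : ℚ_[p], ‖l - a‖ ≤ (p:ℝ)^(γ:ℤ) → E l ∈ W := by
    intro l hl
    rw [hdecomp l hl]
    apply Submodule.sum_mem
    intro c hc
    exact Submodule.smul_mem _ _ (Submodule.subset_span ⟨⟨c, hc⟩, rfl⟩)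
  -- upper bound for the number of spectrum points in the ball
  have hSB : ∀ l ∈ S, ‖l - a‖ ≤ (p:ℝ)^(γ:ℤ) := fun l hl => hl.2
  have hli : LinearIndependent ℂ (fun l : S => E (l : ℚ_[p])) := by
    apply linearIndependent_of_ne_zero_of_inner_eq_zero
    · intro l
      exact hE0 _
    · intro l₁ l₂ hne
      exact hEE0 l₁ l₁.2.1 l₂ l₂.2.1 (fun h => hne (Subtype.ext h))
  have hvW : ∀ l : S, E (l : ℚ_[p]) ∈ W := fun l => hEW l (hSB l l.2)
  have hvli : LinearIndependent ℂ (fun l : S => (⟨E (l : ℚ_[p]), hvW l⟩ : W)) := by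
    apply LinearIndependent.of_comp W.subtype
    exact hli
  haveI hSfinite : Finite S := hvli.finite
  have hSfin : S.Finite := Set.toFinite S
  haveI := hSfin.fintype
  have hcard_le : S.ncard ≤ C.card := by
    have h1 := hvli.fintype_card_le_finrank
    rw [hWrank] at h1
    rwa [Set.ncard_eq_toFinset_card', Set.toFinset_card]
  -- lower bound: otherwise a nonzero vector of W is orthogonal to everything
  by_contra hneq
  have hlt : S.ncard < C.card := lt_of_le_of_ne hcard_le hneq
  set U : Submodule ℂ (Lp ℂ 2 ν) := Submodule.span ℂ (E '' S) with hU
  have hUle : U ≤ W := Submodule.span_le.mpr (by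
    rintro _ ⟨l, hl, rfl⟩
    exact hEW l (hSB l hl))
  haveI : FiniteDimensional ℂ U := Submodule.finiteDimensional_of_le hUle
  have hUrank : Module.finrank ℂ U ≤ S.ncard := by
    have h1 : (E '' S) = ↑(hSfin.toFinset.image E) := by
      rw [Finset.coe_image, Set.Finite.coe_toFinset]
    calc Module.finrank ℂ U ≤ (hSfin.toFinset.image E).card := by
          rw [hU, h1]
          exact finrank_span_finset_le_card _
      _ ≤ hSfin.toFinset.card := Finset.card_image_le
      _ = S.ncard := (Set.ncard_eq_toFinset_card S hSfin).symm
  have hUW : U < W := lt_of_le_of_ne hUle (by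
    intro h
    rw [h, hWrank] at hUrank
    omega)
  obtain ⟨w, hwW, hwU⟩ := SetLike.exists_of_lt hUW
  haveI : CompleteSpace U := FiniteDimensional.complete ℂ U
  set w' : Lp ℂ 2 ν := w - (U.orthogonalProjection w : Lp ℂ 2 ν) with hw'
  have hw'U : w' ∈ Uᗮ := U.sub_starProjection_mem_orthogonal w
  have hw'W : w' ∈ W := W.sub_mem hwW (hUle (U.orthogonalProjection w).2)
  have hw'ne : w' ≠ 0 := by
    intro h
    apply hwU
    have hwp : w = (U.orthogonalProjection w : Lp ℂ 2 ν) := by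
      rw [← sub_eq_zero]
      exact h
    rw [hwp]
    exact (U.orthogonalProjection w).2
  have horthW : ∀ l : ℚ_[p], ¬(‖l - a‖ ≤ (p:ℝ)^(γ:ℤ)) → ∀ u ∈ W, ⟪E l, u⟫ = 0 := by
    intro l hl u hu
    rw [hW] at hu
    induction hu using Submodule.span_induction with
    | mem u hu =>
      obtain ⟨c, rfl⟩ := hu
      rw [← inner_conj_symm, hinner_FE c c.2 l, if_neg hl, map_zero]
    | zero => exact inner_zero_right _
    | add u v _ _ h1 h2 => rw [inner_add_right, h1, h2, add_zero]
    | smul r u _ h1 => rw [inner_smul_right, h1, mul_zero]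
  have hG : ∀ g ∈ {g : Lp ℂ 2 ν | ∃ l ∈ Λ, ∀ᵐ x ∂ν, g x = ψ (l * x)}, ⟪g, w'⟫ = 0 := by
    rintro g ⟨l, hlΛ, hg⟩
    have hg' : (⇑g : ℚ_[p] → ℂ) =ᵐ[ν] fun x => ψ (l * x) := hg
    have hgE : g = E l := MeasureTheory.Lp.ext (hg'.trans (hEcoe l).symm)
    rw [hgE]
    by_cases hlB : ‖l - a‖ ≤ (p:ℝ)^(γ:ℤ)
    · have hEU : E l ∈ U := Submodule.subset_span (Set.mem_image_of_mem E ⟨hlΛ, hlB⟩)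
      exact (Submodule.mem_orthogonal U w').mp hw'U (E l) hEU
    · exact horthW l hlB w' hw'W
  have hw'bot : w' ∈ (Submodule.span ℂ {g : Lp ℂ 2 ν | ∃ l ∈ Λ, ∀ᵐ x ∂ν, g x = ψ (l * x)})ᗮ := by
    rw [Submodule.mem_orthogonal]
    intro u hu
    induction hu using Submodule.span_induction with
    | mem u hu => exact hG u hu
    | zero => exact inner_zero_left _
    | add u v _ _ h1 h2 => rw [inner_add_left, h1, h2, add_zero]
    | smul r u _ h1 => rw [inner_smul_left, h1, mul_zero]
  have hdense : Dense (↑(Submodule.span ℂ {g : Lp ℂ 2 ν | ∃ l ∈ Λ, ∀ᵐ x ∂ν, g x = ψ (l * x)})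
      : Set (Lp ℂ 2 ν)) := hΛ.2
  have hbot : (Submodule.span ℂ {g : Lp ℂ 2 ν | ∃ l ∈ Λ, ∀ᵐ x ∂ν, g x = ψ (l * x)})ᗮ = ⊥ :=
    Submodule.topologicalClosure_eq_top_iff.mp
      (Submodule.dense_iff_topologicalClosure_eq_top.mp hdense)
  rw [hbot] at hw'bot
  exact hw'ne ((Submodule.mem_bot ℂ).mp hw'bot)
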